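/- arXiv:2001.03243 — 2 statements merged into one kernel-verified Lean document; each statement's English description precedes it below -/
import Mathlib

section
/- There is a universal constant C such that for all integers n ≥ 2 and all s ∈ (0, 1), | log Q_n(s) − (n/2) log(1 − s²) + (1/2) log n | ≤ C − log s − (1/2) log(1 − s²). -/
open MeasureTheory Real

noncomputable section

/-- The normalizing constant `κ_n = Γ(n/2)/(√π·Γ((n-1)/2))`. -/
def kappaConst (n : ℕ) : ℝ :=
  Real.Gamma ((n : ℝ) / 2) / (Real.sqrt Real.pi * Real.Gamma (((n : ℝ) - 1) / 2))

/-- `Q_n(g) = κ_n ∫_g^1 (1 - t²)^{(n-3)/2} dt`. -/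
def Qfun (n : ℕ) (g : ℝ) : ℝ :=
  kappaConst n * ∫ t in g..1, (1 - t ^ 2) ^ (((n : ℝ) - 3) / 2)

end

lemma aux_integral_bounds {p s : ℝ} (hp : -1 < p) (hs0 : 0 < s) (hs1 : s < 1) :
    (1 - s ^ 2) ^ (p + 1) / (2 * (p + 1)) ≤ (∫ t in s..1, (1 - t ^ 2) ^ p) ∧
      (∫ t in s..1, (1 - t ^ 2) ^ p) ≤ (1 - s ^ 2) ^ (p + 1) / (2 * (p + 1)) / s := by
  have hq : 0 < p + 1 := by linarith
  have h1s : 0 < 1 - s ^ 2 := by nlinarith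
  set F : ℝ → ℝ := fun t => -(1 - t ^ 2) ^ (p + 1) / (2 * (p + 1)) with hF
  set g : ℝ → ℝ := fun t => t * (1 - t ^ 2) ^ p with hg
  have hcont1 : Continuous fun t : ℝ => (1 - t ^ 2) ^ (p + 1) := by
    rw [continuous_iff_continuousAt]
    intro t
    exact (Real.continuousAt_rpow_const _ _ (Or.inr hq.le)).comp
      ((continuous_const.sub (continuous_pow 2)).continuousAt)
  have hFcont : Continuous F := (hcont1.neg).div_const _
  have hFderiv : ∀ t ∈ Set.Ioo s 1, HasDerivAt F (g t) t := by
    intro t ht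
    have h1t : 1 - t ^ 2 ≠ 0 := by nlinarith [ht.1, ht.2]
    have hinner : HasDerivAt (fun t : ℝ => 1 - t ^ 2) (-(2 * t)) t := by
      simpa using (hasDerivAt_pow 2 t).const_sub 1
    have houter := (hinner.rpow_const (p := p + 1) (Or.inl h1t)).neg.div_const (2 * (p + 1))
    refine houter.congr_deriv ?_
    rw [show p + 1 - 1 = p by ring, hg]
    field_simp
  have hgnonneg : ∀ t ∈ Set.Ioo s 1, 0 ≤ g t := by
    intro t ht
    exact mul_nonneg (by linarith [ht.1]) (Real.rpow_nonneg (by nlinarith [ht.2, ht.1]) p)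
  have hgint : IntervalIntegrable g volume s 1 := by
    apply intervalIntegral.intervalIntegrable_deriv_of_nonneg hFcont.continuousOn
    · intro t ht
      rw [min_eq_left hs1.le, max_eq_right hs1.le] at ht
      exact hFderiv t ht
    · intro t ht
      rw [min_eq_left hs1.le, max_eq_right hs1.le] at ht
      exact hgnonneg t ht
  have hgval : (∫ t in s..1, g t) = (1 - s ^ 2) ^ (p + 1) / (2 * (p + 1)) := by
    rw [intervalIntegral.integral_eq_sub_of_hasDeriv_right_of_le hs1.le hFcont.continuousOn
      (fun t ht => (hFderiv t ht).hasDerivWithinAt) hgint]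
    rw [hF]
    norm_num [Real.zero_rpow hq.ne']
    ring
  have hfmeas : Measurable fun t : ℝ => (1 - t ^ 2) ^ p :=
    (measurable_const.sub (measurable_id.pow_const 2)).pow measurable_const
  have key : ∀ t ∈ Set.Icc s 1, (1 - t ^ 2) ^ p ≤ s⁻¹ * g t := by
    intro t ht
    have h0 : 0 ≤ (1 - t ^ 2) ^ p := Real.rpow_nonneg (by nlinarith [ht.1, ht.2]) p
    rw [hg]
    calc (1 - t ^ 2) ^ p = s⁻¹ * (s * (1 - t ^ 2) ^ p) := by field_simp
    _ ≤ s⁻¹ * (t * (1 - t ^ 2) ^ p) :=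
        mul_le_mul_of_nonneg_left (mul_le_mul_of_nonneg_right ht.1 h0) (inv_nonneg.2 hs0.le)
  have hfint : IntervalIntegrable (fun t : ℝ => (1 - t ^ 2) ^ p) volume s 1 := by
    apply (hgint.const_mul s⁻¹).mono_fun' hfmeas.aestronglyMeasurable
    filter_upwards [MeasureTheory.ae_restrict_mem measurableSet_uIoc] with t ht
    rw [Set.uIoc_of_le hs1.le] at ht
    have h0 : 0 ≤ (1 - t ^ 2) ^ p := Real.rpow_nonneg (by nlinarith [ht.1, ht.2, hs0]) p
    rw [Real.norm_eq_abs, abs_of_nonneg h0]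
    exact key t ⟨ht.1.le, ht.2⟩
  constructor
  · rw [← hgval]
    apply intervalIntegral.integral_mono_on hs1.le hgint hfint
    intro t ht
    exact mul_le_of_le_one_left (Real.rpow_nonneg (by nlinarith [ht.1, ht.2, hs0]) p) ht.2
  · have h2 : (∫ t in s..1, (1 - t ^ 2) ^ p) ≤ ∫ t in s..1, s⁻¹ * g t :=
      intervalIntegral.integral_mono_on hs1.le hfint (hgint.const_mul s⁻¹) key
    rw [intervalIntegral.integral_const_mul, hgval] at h2
    calc (∫ t in s..1, (1 - t ^ 2) ^ p) ≤ s⁻¹ * ((1 - s ^ 2) ^ (p + 1) / (2 * (p + 1))) := h2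
    _ = (1 - s ^ 2) ^ (p + 1) / (2 * (p + 1)) / s := by
        rw [div_div, inv_mul_eq_div, div_div]

lemma aux_midpoint (a b : ℝ) (ha : 0 < a) (hb : 0 < b) :
    Real.log (Real.Gamma ((a + b) / 2)) ≤
      (Real.log (Real.Gamma a) + Real.log (Real.Gamma b)) / 2 := by
  have h := Real.convexOn_log_Gamma.2 (Set.mem_Ioi.2 ha) (Set.mem_Ioi.2 hb)
    (by norm_num : (0:ℝ) ≤ 1/2) (by norm_num : (0:ℝ) ≤ 1/2) (by norm_num)
  simp only [smul_eq_mul, Function.comp_apply] at h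
  rw [show (1:ℝ)/2 * a + 1/2 * b = (a + b)/2 by ring] at h
  linarith

lemma aux_log_gamma_upper {x : ℝ} (hx : 0 < x) :
    Real.log (Real.Gamma (x + 1/2)) ≤ Real.log (Real.Gamma x) + Real.log x / 2 := by
  have h := aux_midpoint x (x + 1) hx (by linarith)
  rw [show (x + (x + 1)) / 2 = x + 1/2 by ring, Real.Gamma_add_one hx.ne',
    Real.log_mul hx.ne' (Real.Gamma_pos_of_pos hx).ne'] at h
  linarith

lemma aux_log_gamma_lower {x : ℝ} (hx : 0 < x) :
    Real.log x + Real.log (Real.Gamma x) ≤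
      Real.log (Real.Gamma (x + 1/2)) + Real.log (x + 1/2) / 2 := by
  have h := aux_midpoint (x + 1/2) (x + 3/2) (by linarith) (by linarith)
  rw [show (x + 1/2 + (x + 3/2)) / 2 = x + 1 by ring,
    show x + (3:ℝ)/2 = (x + 1/2) + 1 by ring,
    Real.Gamma_add_one (by positivity : x + (1:ℝ)/2 ≠ 0),
    Real.Gamma_add_one hx.ne',
    Real.log_mul (by positivity : x + (1:ℝ)/2 ≠ 0) (Real.Gamma_pos_of_pos (by linarith)).ne',
    Real.log_mul hx.ne' (Real.Gamma_pos_of_pos hx).ne'] at h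
  linarith

theorem stmt15 :
    ∃ C : ℝ, ∀ (n : ℕ), 2 ≤ n → ∀ s ∈ Set.Ioo (0 : ℝ) 1,
      abs (Real.log (Qfun n s) - (n : ℝ) / 2 * Real.log (1 - s ^ 2) +
          1 / 2 * Real.log n) ≤
        C - Real.log s - 1 / 2 * Real.log (1 - s ^ 2) := by
  refine ⟨4, fun n hn s hs => ?_⟩
  obtain ⟨hs0, hs1⟩ := hs
  have hn2 : (2:ℝ) ≤ (n:ℝ) := by exact_mod_cast hn
  set x : ℝ := ((n:ℝ) - 1) / 2 with hxdef
  have hx0 : 0 < x := by rw [hxdef]; linarith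
  have hxn : x + 1/2 = (n:ℝ)/2 := by rw [hxdef]; ring
  have h1s : 0 < 1 - s ^ 2 := by nlinarith
  have hp : (-1:ℝ) < ((n:ℝ) - 3)/2 := by linarith
  have hpq : ((n:ℝ) - 3)/2 + 1 = x := by rw [hxdef]; ring
  obtain ⟨hIl, hIu⟩ := aux_integral_bounds hp hs0 hs1
  rw [hpq] at hIl hIu
  set I : ℝ := ∫ t in s..1, (1 - t ^ 2) ^ (((n:ℝ) - 3)/2) with hIdef
  have hA : 0 < Real.Gamma x := Real.Gamma_pos_of_pos hx0
  have hB : 0 < Real.Gamma ((n:ℝ)/2) := Real.Gamma_pos_of_pos (by linarith)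
  have hsπ : 0 < Real.sqrt Real.pi := Real.sqrt_pos.2 Real.pi_pos
  have hκeq : kappaConst n = Real.Gamma ((n:ℝ)/2) / (Real.sqrt Real.pi * Real.Gamma x) := by
    rw [kappaConst, hxdef]
  have hκ : 0 < kappaConst n := by
    rw [hκeq]; positivity
  have hIl0 : 0 < (1 - s ^ 2) ^ x / (2 * x) := by positivity
  have hI0 : 0 < I := lt_of_lt_of_le hIl0 hIl
  have hLκ : Real.log (kappaConst n) =
      Real.log (Real.Gamma ((n:ℝ)/2)) - Real.log Real.pi / 2 - Real.log (Real.Gamma x) := by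
    rw [hκeq, Real.log_div hB.ne' (by positivity), Real.log_mul hsπ.ne' hA.ne',
      Real.log_sqrt Real.pi_pos.le]
    ring
  have hgu := aux_log_gamma_upper hx0
  have hgl := aux_log_gamma_lower hx0
  rw [hxn] at hgu hgl
  have hlogn2 : Real.log ((n:ℝ)/2) = Real.log n - Real.log 2 :=
    Real.log_div (by linarith) two_ne_zero
  rw [hlogn2] at hgl
  -- log of the integral bounds
  have hlbval : Real.log ((1 - s ^ 2) ^ x / (2 * x)) =
      x * Real.log (1 - s ^ 2) - Real.log 2 - Real.log x := by
    rw [Real.log_div (by positivity) (by positivity), Real.log_rpow h1s,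
      Real.log_mul two_ne_zero hx0.ne']
    ring
  have hLIl : x * Real.log (1 - s ^ 2) - Real.log 2 - Real.log x ≤ Real.log I := by
    rw [← hlbval]
    exact (Real.log_le_log_iff hIl0 hI0).mpr hIl
  have hLIu : Real.log I ≤
      x * Real.log (1 - s ^ 2) - Real.log 2 - Real.log x - Real.log s := by
    have h := (Real.log_le_log_iff hI0 (by positivity)).mpr hIu
    rw [Real.log_div (by positivity) hs0.ne', hlbval] at h
    linarith
  have hLQ : Real.log (Qfun n s) = Real.log (kappaConst n) + Real.log I := by
    rw [Qfun, ← hIdef]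
    exact Real.log_mul hκ.ne' hI0.ne'
  -- bound on log x
  have hlogx : Real.log ((n:ℝ)/4) ≤ Real.log x :=
    (Real.log_le_log_iff (by linarith) hx0).mpr (by rw [hxdef]; linarith)
  have hlogn4 : Real.log ((n:ℝ)/4) = Real.log n - Real.log 4 :=
    Real.log_div (by linarith) (by norm_num)
  rw [hlogn4] at hlogx
  -- numeric facts
  have hlog2 : Real.log 2 ≤ 1 := by
    have := Real.log_le_sub_one_of_pos (by norm_num : (0:ℝ) < 2); linarith
  have hlog2n : 0 ≤ Real.log 2 := Real.log_nonneg one_le_two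
  have hlog4 : Real.log 4 ≤ 3 := by
    have := Real.log_le_sub_one_of_pos (by norm_num : (0:ℝ) < 4); linarith
  have hlogπ0 : 0 ≤ Real.log Real.pi := Real.log_nonneg (by linarith [Real.pi_gt_three])
  have hlogπ : Real.log Real.pi ≤ 3 := by
    have := Real.log_le_sub_one_of_pos Real.pi_pos
    linarith [Real.pi_le_four]
  have hlogs : Real.log s ≤ 0 := Real.log_nonpos hs0.le hs1.le
  have hL0 : Real.log (1 - s ^ 2) ≤ 0 := Real.log_nonpos h1s.le (by nlinarith)
  have hxL : x * Real.log (1 - s ^ 2) =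
      (n:ℝ)/2 * Real.log (1 - s ^ 2) - Real.log (1 - s ^ 2)/2 := by
    rw [hxdef]; ring
  rw [abs_le]
  constructor
  · linarith
  · linarith
end

section
/- Let R > 0, M ≥ 1 an integer, and s ∈ [0, 1]. Then: (i) for all n ≥ 2, (1 − Q_n(s))^M ≤ exp( − (M κ_n/(n − 1)) (1 − s²)^{(n−1)/2} ); and (ii) for all n ≥ 3, 1 − (1 − Q_n(s))^M ≤ M κ_n (1 − s²)^{(n−1)/2}. Equivalently, for a random variable S with CDF (1 − Q_n(s))^M these are the bounds P(S ≤ s) ≤ exp(−(Mκ_n/(n−1))(1−s²)^{(n−1)/2}) and P(S ≥ s) ≤ Mκ_n(1−s²)^{(n−1)/2}. -/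
open MeasureTheory Real

section helpers
open Set intervalIntegral
-- integrability of (1-t^2)^p on [s,1] ⊆ [0,1], p > -1
lemma integ1 {p : ℝ} (hp : -1 < p) {a b : ℝ} (ha : 0 ≤ a) (ha1 : a ≤ 1) (hb : 0 ≤ b) (hb1 : b ≤ 1) :
    IntervalIntegrable (fun t : ℝ => (1 - t ^ 2) ^ p) volume a b := by
  have key : IntegrableOn (fun t : ℝ => (1 - t ^ 2) ^ p) (Icc 0 1) volume := by
    have hdom : IntegrableOn (fun t : ℝ => (2 ^ p + 1) * (1 - t) ^ p) (Icc 0 1) volume := by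
      have h1 : IntervalIntegrable (fun t : ℝ => (1 - t) ^ p) volume 0 1 := by
        have := (intervalIntegrable_rpow' (a := 1) (b := 0) hp).comp_sub_left 1
        simpa using this
      exact ((intervalIntegrable_iff_integrableOn_Icc_of_le zero_le_one).mp h1).const_mul _
    refine hdom.integrable.mono ?_ ?_
    · exact (Measurable.aestronglyMeasurable (by measurability)).restrict
    · filter_upwards [ae_restrict_mem measurableSet_Icc] with t ht
      have h0 : (0:ℝ) ≤ 1 - t := by linarith [ht.2]
      have h2 : (0:ℝ) ≤ 1 + t := by linarith [ht.1]
      have hfact : 1 - t ^ 2 = (1 - t) * (1 + t) := by ring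
      rw [norm_of_nonneg (rpow_nonneg (by nlinarith : (0:ℝ) ≤ 1 - t^2) _)]
      rw [norm_of_nonneg (by positivity)]
      rw [hfact, mul_rpow h0 h2]
      rcases le_or_gt 0 p with hp0 | hp0
      · have : (1 + t) ^ p ≤ 2 ^ p := rpow_le_rpow h2 (by linarith [ht.2]) hp0
        nlinarith [rpow_nonneg h0 p, rpow_nonneg h2 p, rpow_nonneg (by norm_num : (0:ℝ) ≤ 2) p]
      · have : (1 + t) ^ p ≤ 1 := rpow_le_one_of_one_le_of_nonpos (by linarith [ht.1]) hp0.le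
        nlinarith [rpow_nonneg h0 p, rpow_nonneg (by norm_num : (0:ℝ) ≤ 2) p]
  have : IntervalIntegrable (fun t : ℝ => (1 - t ^ 2) ^ p) volume 0 1 :=
    (intervalIntegrable_iff_integrableOn_Icc_of_le zero_le_one).mpr key
  exact this.mono_set (by rw [uIcc_of_le zero_le_one]; intro x hx; rcases mem_uIcc.mp hx with ⟨h1,h2⟩|⟨h1,h2⟩ <;> constructor <;> linarith)

lemma integB {p : ℝ} (hp : -1 < p) {s : ℝ} (hs0 : 0 ≤ s) (hs1 : s ≤ 1) :
    ∫ t in s..1, t * (1 - t ^ 2) ^ p = (1 - s ^ 2) ^ (p + 1) / (2 * (p + 1)) := by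
  have hmin : min s 1 = s := min_eq_left hs1
  have hmax : max s 1 = 1 := max_eq_right hs1
  have key : (∫ t in s..1, (-2 * t) • ((1 - t ^ 2) ^ p)) =
      ∫ u in (1 - s ^ 2)..(1 - 1 ^ 2 : ℝ), u ^ p := by
    apply integral_comp_smul_deriv''' (f := fun t => 1 - t ^ 2) (f' := fun t => -2 * t)
      (g := fun u => u ^ p)
    · exact (continuousOn_const.sub (continuousOn_pow 2))
    · intro x hx
      have : HasDerivAt (fun t : ℝ => 1 - t ^ 2) (-2 * x) x := by
        simpa using ((hasDerivAt_pow 2 x).const_sub 1)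
      exact this.hasDerivWithinAt
    · rw [hmin, hmax]
      refine ContinuousOn.mono (s := Ioi (0:ℝ))
        (continuousOn_id.rpow_const (fun x hx => Or.inl (ne_of_gt hx))) ?_
      rintro u ⟨x, hx, rfl⟩
      simp only [mem_Ioi]
      nlinarith [hx.1, hx.2, hs0]
    · refine IntegrableOn.mono_set ((intervalIntegrable_iff_integrableOn_Icc_of_le
        (by nlinarith : (0:ℝ) ≤ 1 - s ^ 2)).mp (intervalIntegrable_rpow' hp)) ?_
      rintro u ⟨x, hx, rfl⟩
      rw [uIcc_of_le hs1] at hx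
      simp only [mem_Icc]
      constructor <;> nlinarith [hx.1, hx.2, hs0]
    · rw [uIcc_of_le hs1]
      have h1 : IntegrableOn (fun t : ℝ => (1 - t ^ 2) ^ p) (Icc s 1) volume :=
        (intervalIntegrable_iff_integrableOn_Icc_of_le hs1).mp (integ1 hp hs0 hs1 zero_le_one le_rfl)
      refine Integrable.bdd_mul (c := 2) h1 ?_ ?_
      · exact ((measurable_const.mul measurable_id).aestronglyMeasurable).restrict
      · filter_upwards [ae_restrict_mem measurableSet_Icc] with t ht
        rw [Real.norm_eq_abs, abs_mul]
        have : |t| ≤ 1 := abs_le.mpr ⟨by linarith [ht.1], ht.2⟩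
        rw [abs_of_neg (by norm_num : (-2:ℝ) < 0)] ; nlinarith [abs_nonneg t]
  have hrw : (∫ t in s..1, (-2 * t) • ((1 - t ^ 2) ^ p)) =
      (-2) * ∫ t in s..1, t * (1 - t ^ 2) ^ p := by
    rw [← intervalIntegral.integral_const_mul]
    congr 1; funext t; simp [smul_eq_mul]; ring
  rw [hrw] at key
  rw [show (1 - 1 ^ 2 : ℝ) = 0 by norm_num] at key
  rw [integral_rpow (Or.inl hp)] at key
  have hp1 : p + 1 ≠ 0 := by linarith
  have h0p : (0:ℝ) ^ (p + 1) = 0 := Real.zero_rpow hp1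
  rw [h0p] at key
  have := key
  field_simp at this ⊢
  linarith

lemma integC {p : ℝ} (hp : -1 < p) :
    (2 : ℂ) * ((∫ t in (0:ℝ)..1, (1 - t ^ 2) ^ p : ℝ) : ℂ) =
      Complex.betaIntegral (1/2) ((p : ℂ) + 1) := by
  have h2 : ∀ t : ℝ, t ∈ Set.uIoc (0:ℝ) 1 → (2 * t) • (((((t^2 : ℝ)) : ℂ)) ^ ((1/2 : ℂ) - 1) *
      (1 - (((t^2 : ℝ)) : ℂ)) ^ ((p : ℂ) + 1 - 1)) = ((2 * (1 - t ^ 2) ^ p : ℝ) : ℂ) := by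
    intro t ht
    rw [uIoc_of_le zero_le_one] at ht
    have ht0 : 0 < t := ht.1
    have ht1 : t ≤ 1 := ht.2
    have e1 : ((1/2 : ℂ) - 1) = ((-(1/2) : ℝ) : ℂ) := by norm_num
    have e2 : ((p : ℂ) + 1 - 1) = (p : ℂ) := by ring
    rw [e1, e2, ← Complex.ofReal_cpow (by positivity) (-(1/2))]
    have e3 : (1 : ℂ) - ((t^2 : ℝ) : ℂ) = (((1 - t^2 : ℝ)) : ℂ) := by push_cast; ring
    rw [e3, ← Complex.ofReal_cpow (by nlinarith) p]
    have e4 : (t ^ 2 : ℝ) ^ (-(1/2) : ℝ) = t⁻¹ := by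
      rw [← Real.rpow_natCast t 2, ← Real.rpow_mul ht0.le]
      norm_num
      exact Real.rpow_neg_one t
    rw [e4, Complex.real_smul]
    have htC : (t : ℂ) ≠ 0 := Complex.ofReal_ne_zero.mpr (ne_of_gt ht0)
    push_cast
    field_simp
  have key : (∫ t in (0:ℝ)..1, (2 * t) • ((((t^2 : ℝ) : ℂ)) ^ ((1/2 : ℂ) - 1) *
      (1 - ((t^2 : ℝ) : ℂ)) ^ ((p : ℂ) + 1 - 1))) =
      ∫ x in ((0:ℝ)^2 : ℝ)..((1:ℝ)^2 : ℝ), ((x : ℂ)) ^ ((1/2 : ℂ) - 1) *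
        (1 - (x : ℂ)) ^ ((p : ℂ) + 1 - 1) := by
    apply integral_comp_smul_deriv''' (f := fun t : ℝ => t ^ 2) (f' := fun t => 2 * t)
      (g := fun x : ℝ => ((x : ℂ)) ^ ((1/2 : ℂ) - 1) * (1 - (x : ℂ)) ^ ((p : ℂ) + 1 - 1))
    · exact (continuousOn_pow 2)
    · intro x hx
      simpa [mul_comm] using ((hasDerivAt_pow 2 x).hasDerivWithinAt)
    · rw [min_eq_left zero_le_one, max_eq_right zero_le_one]
      refine ContinuousOn.mono (s := Ioo (0:ℝ) 1) ?_ ?_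
      · intro x hx
        refine ContinuousWithinAt.mul ?_ ?_
        · exact (Complex.continuousAt_ofReal_cpow_const x _ (Or.inr (ne_of_gt hx.1))).continuousWithinAt
        · have : ContinuousAt (fun y : ℝ => ((1 - y : ℝ) : ℂ) ^ ((p:ℂ) + 1 - 1)) x := by
            have hc : ContinuousAt (fun y : ℝ => (y : ℂ) ^ ((p:ℂ) + 1 - 1)) (1 - x) :=
              Complex.continuousAt_ofReal_cpow_const _ _ (Or.inr (by linarith [hx.2] : (1:ℝ) - x ≠ 0))
            exact hc.comp (by fun_prop)
          refine (this.congr ?_).continuousWithinAt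
          filter_upwards with y; push_cast; ring_nf
      · rintro u ⟨x, hx, rfl⟩
        exact ⟨by simp only; nlinarith [hx.1, hx.2], by simp only; nlinarith [hx.1, hx.2]⟩
    · refine IntegrableOn.mono_set (t := Icc (0:ℝ) 1) ?_ ?_
      · exact (intervalIntegrable_iff_integrableOn_Icc_of_le zero_le_one).mp
          (Complex.betaIntegral_convergent (by norm_num) (by simp; linarith))
      · rintro u ⟨x, hx, rfl⟩
        rw [uIcc_of_le zero_le_one] at hx
        exact ⟨by simp only; positivity, by simp only; nlinarith [hx.1, hx.2]⟩
    · rw [uIcc_of_le zero_le_one]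
      have h1 : IntegrableOn (fun t : ℝ => ((2 * (1 - t ^ 2) ^ p : ℝ) : ℂ)) (Icc 0 1) volume := by
        have := ((intervalIntegrable_iff_integrableOn_Icc_of_le zero_le_one).mp
          (integ1 hp le_rfl zero_le_one zero_le_one le_rfl)).const_mul (2:ℝ)
        exact this.ofReal
      refine h1.congr_fun_ae ?_
      have hnull : (volume.restrict (Icc (0:ℝ) 1)) {0} = 0 := by
        simp
      filter_upwards [ae_restrict_mem measurableSet_Icc,
        (measure_eq_zero_iff_ae_notMem.mp (by simp : (volume : Measure ℝ) {0} = 0)).filter_mono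
          (ae_mono Measure.restrict_le_self)] with t ht ht0
      have : t ∈ Set.uIoc (0:ℝ) 1 := by
        rw [uIoc_of_le zero_le_one]
        exact ⟨lt_of_le_of_ne ht.1 (Ne.symm (by simpa using ht0)), ht.2⟩
      exact (h2 t this).symm
  have hL : (∫ t in (0:ℝ)..1, (2 * t) • ((((t^2 : ℝ) : ℂ)) ^ ((1/2 : ℂ) - 1) *
      (1 - ((t^2 : ℝ) : ℂ)) ^ ((p : ℂ) + 1 - 1))) = (2:ℂ) * ((∫ t in (0:ℝ)..1, (1 - t ^ 2) ^ p : ℝ) : ℂ) := by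
    rw [intervalIntegral.integral_congr_ae (ae_of_all _ h2)]
    have : (∫ t in (0:ℝ)..1, ((2 * (1 - t ^ 2) ^ p : ℝ) : ℂ)) =
        (((∫ t in (0:ℝ)..1, 2 * (1 - t ^ 2) ^ p : ℝ)) : ℂ) := by
      exact RCLike.intervalIntegral_ofReal (𝕜 := ℂ) (f := fun t => 2 * (1 - t^2)^p)
    rw [this, intervalIntegral.integral_const_mul]
    push_cast; ring
  rw [hL] at key
  rw [key]
  unfold Complex.betaIntegral
  norm_num

lemma normalization {p : ℝ} (hp : -1 < p) :
    ∫ t in (0:ℝ)..1, (1 - t ^ 2) ^ p =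
      Real.Gamma (1/2) * Real.Gamma (p + 1) / (2 * Real.Gamma (p + 3/2)) := by
  have hbeta := Complex.Gamma_mul_Gamma_eq_betaIntegral (s := (1/2 : ℂ)) (t := (p : ℂ) + 1)
    (by norm_num) (by simp; linarith)
  rw [← integC hp] at hbeta
  have hsum : (1/2 : ℂ) + ((p : ℂ) + 1) = ((p + 3/2 : ℝ) : ℂ) := by push_cast; ring
  rw [hsum] at hbeta
  have h12 : (1/2 : ℂ) = ((1/2 : ℝ) : ℂ) := by norm_num
  have hp1 : ((p : ℂ) + 1) = ((p + 1 : ℝ) : ℂ) := by push_cast; ring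
  rw [h12, hp1, Complex.Gamma_ofReal, Complex.Gamma_ofReal, Complex.Gamma_ofReal] at hbeta
  have hreal : (Real.Gamma (1/2) * Real.Gamma (p+1) : ℝ) =
      Real.Gamma (p + 3/2) * (2 * ∫ t in (0:ℝ)..1, (1 - t ^ 2) ^ p) := by
    have := hbeta
    rw [← Complex.ofReal_mul] at this
    rw [show ((Real.Gamma (p + 3/2) : ℂ)) * (2 * ((∫ t in (0:ℝ)..1, (1 - t ^ 2) ^ p : ℝ) : ℂ))
      = (((Real.Gamma (p + 3/2) * (2 * ∫ t in (0:ℝ)..1, (1 - t ^ 2) ^ p) : ℝ)) : ℂ) by push_cast; ring] at this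
    exact_mod_cast this
  have hGpos : 0 < Real.Gamma (p + 3/2) := Real.Gamma_pos_of_pos (by linarith)
  rw [hreal]
  rw [show p + 3/2 = (p*2+3)/2 by ring] at hGpos
  field_simp

-- integrability of t * (1-t^2)^p
lemma integ2 {p : ℝ} (hp : -1 < p) {s : ℝ} (hs0 : 0 ≤ s) (hs1 : s ≤ 1) :
    IntervalIntegrable (fun t : ℝ => t * (1 - t ^ 2) ^ p) volume s 1 := by
  rw [intervalIntegrable_iff_integrableOn_Icc_of_le hs1]
  have h1 : IntegrableOn (fun t : ℝ => (1 - t ^ 2) ^ p) (Icc s 1) volume :=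
    (intervalIntegrable_iff_integrableOn_Icc_of_le hs1).mp (integ1 hp hs0 hs1 zero_le_one le_rfl)
  refine Integrable.bdd_mul (c := 1) h1 (measurable_id.aestronglyMeasurable).restrict ?_
  filter_upwards [ae_restrict_mem measurableSet_Icc] with t ht
  rw [Real.norm_eq_abs]
  exact abs_le.mpr ⟨by linarith [ht.1], ht.2⟩

end helpers

section facts

lemma kappa_pos {n : ℕ} (hn : 2 ≤ n) : 0 < kappaConst n := by
  have h1 : (0:ℝ) < (n:ℝ) / 2 := by
    have : (2:ℝ) ≤ n := by exact_mod_cast hn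
    linarith
  have h2 : (0:ℝ) < ((n:ℝ) - 1) / 2 := by
    have : (2:ℝ) ≤ n := by exact_mod_cast hn
    linarith
  exact div_pos (Real.Gamma_pos_of_pos h1)
    (mul_pos (Real.sqrt_pos.mpr Real.pi_pos) (Real.Gamma_pos_of_pos h2))

lemma hp_lemma {n : ℕ} (hn : 2 ≤ n) : (-1 : ℝ) < ((n:ℝ) - 3) / 2 := by
  have : (2:ℝ) ≤ n := by exact_mod_cast hn
  linarith

-- κ_n ∫_0^1 (1-t²)^{(n-3)/2} = 1/2
lemma kappa_norm {n : ℕ} (hn : 2 ≤ n) :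
    kappaConst n * ∫ t in (0:ℝ)..1, (1 - t ^ 2) ^ (((n : ℝ) - 3) / 2) = 1/2 := by
  have hn2 : (2:ℝ) ≤ n := by exact_mod_cast hn
  set p : ℝ := ((n:ℝ) - 3) / 2 with hpdef
  have hp : (-1:ℝ) < p := hp_lemma hn
  rw [normalization hp]
  have e1 : p + 1 = ((n:ℝ) - 1) / 2 := by rw [hpdef]; ring
  have e2 : p + 3/2 = (n:ℝ) / 2 := by rw [hpdef]; ring
  rw [e1, e2, Real.Gamma_one_half_eq]
  unfold kappaConst
  have g1 : 0 < Real.Gamma ((n:ℝ) / 2) := Real.Gamma_pos_of_pos (by linarith)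
  have g2 : 0 < Real.Gamma (((n:ℝ) - 1) / 2) := Real.Gamma_pos_of_pos (by linarith)
  have g3 : (0:ℝ) < Real.sqrt Real.pi := Real.sqrt_pos.mpr Real.pi_pos
  field_simp

lemma Q_nonneg {n : ℕ} (hn : 2 ≤ n) {s : ℝ} (hs0 : 0 ≤ s) (hs1 : s ≤ 1) :
    0 ≤ Qfun n s := by
  unfold Qfun
  apply mul_nonneg (kappa_pos hn).le
  apply intervalIntegral.integral_nonneg hs1
  intro t ht
  exact Real.rpow_nonneg (by nlinarith [ht.1, ht.2]) _

lemma Q_le_half {n : ℕ} (hn : 2 ≤ n) {s : ℝ} (hs0 : 0 ≤ s) (hs1 : s ≤ 1) :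
    Qfun n s ≤ 1/2 := by
  have hp : (-1:ℝ) < ((n:ℝ) - 3) / 2 := hp_lemma hn
  unfold Qfun
  rw [← kappa_norm hn]
  apply mul_le_mul_of_nonneg_left _ (kappa_pos hn).le
  have hsplit : (∫ t in (0:ℝ)..s, (1 - t ^ 2) ^ (((n : ℝ) - 3) / 2)) +
      (∫ t in s..1, (1 - t ^ 2) ^ (((n : ℝ) - 3) / 2)) =
      ∫ t in (0:ℝ)..1, (1 - t ^ 2) ^ (((n : ℝ) - 3) / 2) :=
    intervalIntegral.integral_add_adjacent_intervals
      (integ1 hp le_rfl zero_le_one hs0 hs1) (integ1 hp hs0 hs1 zero_le_one le_rfl)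
  have hpos : 0 ≤ ∫ t in (0:ℝ)..s, (1 - t ^ 2) ^ (((n : ℝ) - 3) / 2) := by
    apply intervalIntegral.integral_nonneg hs0
    intro t ht
    exact Real.rpow_nonneg (by nlinarith [ht.1, ht.2]) _
  linarith

lemma Q_lower {n : ℕ} (hn : 2 ≤ n) {s : ℝ} (hs0 : 0 ≤ s) (hs1 : s ≤ 1) :
    kappaConst n / ((n:ℝ) - 1) * (1 - s ^ 2) ^ (((n : ℝ) - 1) / 2) ≤ Qfun n s := by
  have hn2 : (2:ℝ) ≤ n := by exact_mod_cast hn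
  set p : ℝ := ((n:ℝ) - 3) / 2 with hpdef
  have hp : (-1:ℝ) < p := hp_lemma hn
  have hmono : (∫ t in s..1, t * (1 - t ^ 2) ^ p) ≤ ∫ t in s..1, (1 - t ^ 2) ^ p := by
    apply intervalIntegral.integral_mono_on hs1 (integ2 hp hs0 hs1)
      (integ1 hp hs0 hs1 zero_le_one le_rfl)
    intro t ht
    have h1 : 0 ≤ (1 - t ^ 2) ^ p := Real.rpow_nonneg (by nlinarith [ht.1, ht.2]) _
    nlinarith [ht.1, ht.2]
  rw [integB hp hs0 hs1] at hmono
  have e1 : p + 1 = ((n:ℝ) - 1) / 2 := by rw [hpdef]; ring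
  have e2 : 2 * (p + 1) = (n:ℝ) - 1 := by rw [hpdef]; ring
  rw [e1] at hmono
  rw [show 2 * (((n:ℝ) - 1)/2) = (n:ℝ) - 1 by ring] at hmono
  unfold Qfun
  rw [div_mul_eq_mul_div, div_le_iff₀ (by linarith : (0:ℝ) < (n:ℝ) - 1)]
  calc kappaConst n * (1 - s ^ 2) ^ (((n:ℝ) - 1) / 2)
      = kappaConst n * ((1 - s ^ 2) ^ (((n:ℝ) - 1) / 2) / ((n:ℝ) - 1)) * ((n:ℝ) - 1) := by
        field_simp
        rw [eq_div_iff (by linarith : (n:ℝ) - 1 ≠ 0)]; ring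
    _ ≤ kappaConst n * (∫ t in s..1, (1 - t ^ 2) ^ p) * ((n:ℝ) - 1) := by
        apply mul_le_mul_of_nonneg_right _ (by linarith)
        exact mul_le_mul_of_nonneg_left hmono (kappa_pos hn).le

lemma Q_upper {n : ℕ} (hn : 3 ≤ n) {s : ℝ} (hs0 : 0 ≤ s) (hs1 : s ≤ 1) :
    Qfun n s ≤ kappaConst n * (1 - s ^ 2) ^ (((n : ℝ) - 1) / 2) := by
  have hn3 : (3:ℝ) ≤ n := by exact_mod_cast hn
  set p : ℝ := ((n:ℝ) - 3) / 2 with hpdef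
  have hp0 : 0 ≤ p := by rw [hpdef]; linarith
  have hp : (-1:ℝ) < p := by linarith
  have hb : (0:ℝ) ≤ 1 - s ^ 2 := by nlinarith
  have hmono : (∫ t in s..1, (1 - t ^ 2) ^ p) ≤ ∫ _t in s..1, (1 - s ^ 2) ^ p := by
    apply intervalIntegral.integral_mono_on hs1 (integ1 hp hs0 hs1 zero_le_one le_rfl)
      intervalIntegrable_const
    intro t ht
    exact Real.rpow_le_rpow (by nlinarith [ht.1, ht.2]) (by nlinarith [ht.1, ht.2]) hp0
  rw [intervalIntegral.integral_const, smul_eq_mul] at hmono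
  have hstep : (1 - s) * (1 - s ^ 2) ^ p ≤ (1 - s ^ 2) ^ (((n:ℝ) - 1) / 2) := by
    have e : ((n:ℝ) - 1) / 2 = p + 1 := by rw [hpdef]; ring
    rw [e, Real.rpow_add' hb (by linarith : p + 1 ≠ 0), Real.rpow_one]
    have h1 : 0 ≤ (1 - s ^ 2) ^ p := Real.rpow_nonneg hb _
    nlinarith [mul_nonneg h1 (by nlinarith : (0:ℝ) ≤ s - s ^ 2)]
  unfold Qfun
  apply mul_le_mul_of_nonneg_left _ (kappa_pos (by omega)).le
  linarith

end facts

/-- Tail bounds for the maximum `S` of `M` i.i.d. cosine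
similarities, whose CDF is `(1 - Q_n(s))^M`: for `s ∈ [0,1]`,
(i) for `n ≥ 2`, `P(S ≤ s) = (1-Q_n(s))^M ≤ exp(-(Mκ_n/(n-1))(1-s²)^{(n-1)/2})`;
(ii) for `n ≥ 3`, `P(S ≥ s) = 1-(1-Q_n(s))^M ≤ Mκ_n(1-s²)^{(n-1)/2}`. -/
theorem stmt16 (R : ℝ) (hR : 0 < R) (M : ℕ) (hM : 1 ≤ M)
    (s : ℝ) (hs : s ∈ Set.Icc (0 : ℝ) 1) :
    (∀ n : ℕ, 2 ≤ n →
      (1 - Qfun n s) ^ M ≤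
        Real.exp (-((M : ℝ) * kappaConst n / ((n : ℝ) - 1)) *
          (1 - s ^ 2) ^ (((n : ℝ) - 1) / 2))) ∧
    (∀ n : ℕ, 3 ≤ n →
      1 - (1 - Qfun n s) ^ M ≤
        (M : ℝ) * kappaConst n * (1 - s ^ 2) ^ (((n : ℝ) - 1) / 2)) := by
  obtain ⟨hs0, hs1⟩ := hs
  constructor
  · intro n hn
    have hn2 : (2:ℝ) ≤ n := by exact_mod_cast hn
    set Q := Qfun n s with hQdef
    set c := kappaConst n / ((n:ℝ) - 1) * (1 - s ^ 2) ^ (((n : ℝ) - 1) / 2) with hcdef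
    have hc0 : 0 ≤ c := by
      apply mul_nonneg (div_nonneg (kappa_pos hn).le (by linarith)) (Real.rpow_nonneg (by nlinarith) _)
    have hcQ : c ≤ Q := Q_lower hn hs0 hs1
    have hQh : Q ≤ 1/2 := Q_le_half hn hs0 hs1
    have h1 : (1 - Q) ^ M ≤ (1 - c) ^ M :=
      pow_le_pow_left₀ (by linarith) (by linarith) M
    have h2 : (1 - c) ^ M ≤ (Real.exp (-c)) ^ M :=
      pow_le_pow_left₀ (by linarith) (by linarith [Real.add_one_le_exp (-c)]) M
    have h3 : (Real.exp (-c)) ^ M = Real.exp ((M : ℝ) * (-c)) := (Real.exp_nat_mul (-c) M).symm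
    have h4 : (M : ℝ) * (-c) = -((M : ℝ) * kappaConst n / ((n : ℝ) - 1)) *
        (1 - s ^ 2) ^ (((n : ℝ) - 1) / 2) := by
      rw [hcdef]; ring
    calc (1 - Q) ^ M ≤ (1 - c) ^ M := h1
      _ ≤ (Real.exp (-c)) ^ M := h2
      _ = _ := by rw [h3, h4]
  · intro n hn
    have hn2 : 2 ≤ n := by omega
    set Q := Qfun n s with hQdef
    have hQ0 : 0 ≤ Q := Q_nonneg hn2 hs0 hs1
    have hQh : Q ≤ 1/2 := Q_le_half hn2 hs0 hs1
    have hbern : 1 + (M : ℝ) * (-Q) ≤ (1 + (-Q)) ^ M :=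
      one_add_mul_le_pow (by linarith) M
    have hup : Q ≤ kappaConst n * (1 - s ^ 2) ^ (((n : ℝ) - 1) / 2) := Q_upper hn hs0 hs1
    have hMQ : 1 - (1 - Q) ^ M ≤ (M : ℝ) * Q := by
      have : (1 + (-Q)) ^ M = (1 - Q) ^ M := by ring_nf
      linarith [hbern, this.symm.le]
    calc 1 - (1 - Q) ^ M ≤ (M : ℝ) * Q := hMQ
      _ ≤ (M : ℝ) * (kappaConst n * (1 - s ^ 2) ^ (((n : ℝ) - 1) / 2)) := by
          apply mul_le_mul_of_nonneg_left hup (by positivity)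
      _ = _ := by ring
end
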